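/- Let a₁, a₂, a₃, a₄ be real numbers with a₁a₂ > 0, set a₅ := −1/(a₁a₂), and assume D := (a₁a₂ + a₁ + 1)² − 4a₁a₂ ≥ 0. Then (a₃a₄/2)·( (a₁a₅ + a₅ + 1)(a₁a₂ + a₁ + 1) + √( ((a₁a₅ + a₅ + 1)² − 4a₁a₅)·D ) ) = a₃a₄·(a₁a₂ + a₁ − 1). -/

import Mathlib

/-- Closed-form evaluation of `{y₂, y₁} + {y₃, y₄}` under the Rank Condition
`a₅ = −1/(a₁a₂)`. -/
theorem bracket_sum_evaluation (a₁ a₂ a₃ a₄ : ℝ) (hpos : 0 < a₁ * a₂)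
    (hD : 0 ≤ (a₁ * a₂ + a₁ + 1) ^ 2 - 4 * (a₁ * a₂)) :
    let a₅ := -1 / (a₁ * a₂)
    a₃ * a₄ / 2 *
        ((a₁ * a₅ + a₅ + 1) * (a₁ * a₂ + a₁ + 1) +
          Real.sqrt
            (((a₁ * a₅ + a₅ + 1) ^ 2 - 4 * (a₁ * a₅)) *
              ((a₁ * a₂ + a₁ + 1) ^ 2 - 4 * (a₁ * a₂)))) =
      a₃ * a₄ * (a₁ * a₂ + a₁ - 1) := by
  intro a₅
  have hp : a₁ * a₂ ≠ 0 := ne_of_gt hpos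
  have key : ((a₁ * a₅ + a₅ + 1) ^ 2 - 4 * (a₁ * a₅)) *
      ((a₁ * a₂ + a₁ + 1) ^ 2 - 4 * (a₁ * a₂)) =
      (((a₁ * a₂ + a₁ + 1) ^ 2 - 4 * (a₁ * a₂)) / (a₁ * a₂)) ^ 2 := by
    show ((a₁ * (-1 / (a₁ * a₂)) + (-1 / (a₁ * a₂)) + 1) ^ 2 - 4 * (a₁ * (-1 / (a₁ * a₂)))) *
      ((a₁ * a₂ + a₁ + 1) ^ 2 - 4 * (a₁ * a₂)) =
      (((a₁ * a₂ + a₁ + 1) ^ 2 - 4 * (a₁ * a₂)) / (a₁ * a₂)) ^ 2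
    field_simp [left_ne_zero_of_mul hp, right_ne_zero_of_mul hp]
    ring
  rw [key, Real.sqrt_sq (div_nonneg hD hpos.le)]
  show a₃ * a₄ / 2 *
      ((a₁ * (-1 / (a₁ * a₂)) + (-1 / (a₁ * a₂)) + 1) * (a₁ * a₂ + a₁ + 1) +
        ((a₁ * a₂ + a₁ + 1) ^ 2 - 4 * (a₁ * a₂)) / (a₁ * a₂)) =
      a₃ * a₄ * (a₁ * a₂ + a₁ - 1)
  field_simp [left_ne_zero_of_mul hp, right_ne_zero_of_mul hp]
  ring
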